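/- Let X be a continuous random variable with PDF f and CDF F supported on (l, r), let x₀ ∈ (l, r), and let g be a continuously differentiable function with g(x) > 0 and g'(x) > 0 for all x ∈ (l, x₀). Define P(x) = f(x) · g(x)/g'(x) and suppose P(x) → 0 as x → l. If x ↦ f(x)/g'(x) is monotone increasing on (l, x₀), then F(x) ≤ P(x) for all x ∈ (l, x₀). -/

import Mathlib

open MeasureTheory Set Filter
open Topology

/-- Theorem 2 (left-tail upper bound): for a RV supported on `(l, r)` with CDF `F`
and continuously differentiable PDF `f`, if `g > 0`, `g' > 0` on `(l, x₀)`,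
`P x = f x * g x / g' x` tends to `0` as `x → l⁺`, and `f / g'` is increasing
on `(l, x₀)`, then `F x ≤ P x` on `(l, x₀)`. -/
theorem stmt_8 (μ : Measure ℝ) [IsProbabilityMeasure μ]
    (l r : EReal) (hlr : l < r)
    (F f g P : ℝ → ℝ)
    (hFdef : ∀ x, F x = (μ (Iic x)).toReal)
    (hsupp : μ {x : ℝ | ¬ (l < (x : EReal) ∧ (x : EReal) < r)} = 0)
    (hf : ∀ x : ℝ, l < (x : EReal) → (x : EReal) < r → HasDerivAt F (f x) x)
    (hfdiff : ∀ x : ℝ, l < (x : EReal) → (x : EReal) < r → DifferentiableAt ℝ f x)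
    (hfC : ContinuousOn (deriv f) {x : ℝ | l < (x : EReal) ∧ (x : EReal) < r})
    (x₀ : ℝ) (hx₀l : l < (x₀ : EReal)) (hx₀r : (x₀ : EReal) < r)
    (hgdiff : ∀ x : ℝ, l < (x : EReal) → x < x₀ → DifferentiableAt ℝ g x)
    (hgC : ContinuousOn (deriv g) {x : ℝ | l < (x : EReal) ∧ x < x₀})
    (hgpos : ∀ x : ℝ, l < (x : EReal) → x < x₀ → 0 < g x)
    (hg' : ∀ x : ℝ, l < (x : EReal) → x < x₀ → 0 < deriv g x)
    (hP : ∀ x, P x = f x * (g x / deriv g x))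
    (hPlim : Tendsto P (comap (fun x : ℝ => (x : EReal)) (nhdsWithin l (Ioi l)))
      (nhds 0))
    (hmono : MonotoneOn (fun x => f x / deriv g x)
      {x : ℝ | l < (x : EReal) ∧ x < x₀}) :
    ∀ x : ℝ, l < (x : EReal) → x < x₀ → F x ≤ P x := by
  intro x hxl hxx₀
  have hxr : (x : EReal) < r := lt_trans (by exact_mod_cast hxx₀) hx₀r
  -- F is monotone
  have hFmono : Monotone F := by
    intro a b hab
    rw [hFdef, hFdef]
    exact ENNReal.toReal_mono (measure_ne_top μ _)
      (measure_mono (Iic_subset_Iic.2 hab))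
  -- f x ≥ 0
  have hfx0 : 0 ≤ f x := by
    have h1 : Tendsto (slope F x) (𝓝[>] x) (𝓝 (f x)) :=
      (hasDerivAt_iff_tendsto_slope.1 (hf x hxl hxr)).mono_left
        (nhdsWithin_mono _ (fun y hy => ne_of_gt hy))
    refine ge_of_tendsto h1 ?_
    filter_upwards [self_mem_nhdsWithin] with y hy
    rw [slope_def_field]
    exact div_nonneg (sub_nonneg.2 (hFmono (le_of_lt hy))) (sub_nonneg.2 (le_of_lt hy))
  have hg'x : 0 < deriv g x := hg' x hxl hxx₀
  set c := f x / deriv g x with hc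
  have hc0 : 0 ≤ c := div_nonneg hfx0 hg'x.le
  -- key estimate for a ∈ (l, x)
  have key : ∀ a : ℝ, l < (a : EReal) → a < x → F x - P x ≤ F a := by
    intro a hal hax
    have hmem : ∀ t : ℝ, t ∈ Icc a x → l < (t : EReal) ∧ t < x₀ := by
      intro t ht
      exact ⟨lt_of_lt_of_le hal (by exact_mod_cast ht.1), lt_of_le_of_lt ht.2 hxx₀⟩
    have hmemr : ∀ t : ℝ, t ∈ Icc a x → l < (t : EReal) ∧ (t : EReal) < r := by
      intro t ht
      exact ⟨(hmem t ht).1, lt_trans (by exact_mod_cast (hmem t ht).2) hx₀r⟩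
    have huIcc : uIcc a x = Icc a x := uIcc_of_le hax.le
    -- FTC for F
    have hfint : IntervalIntegrable f volume a x := by
      apply ContinuousOn.intervalIntegrable
      rw [huIcc]
      intro t ht
      exact ((hfdiff t (hmemr t ht).1 (hmemr t ht).2).continuousAt).continuousWithinAt
    have hFTC : ∫ t in a..x, f t = F x - F a := by
      apply intervalIntegral.integral_eq_sub_of_hasDerivAt
      · intro t ht
        rw [huIcc] at ht
        exact hf t (hmemr t ht).1 (hmemr t ht).2
      · exact hfint
    -- FTC for g
    have hopen : IsOpen {y : ℝ | l < (y : EReal) ∧ y < x₀} := by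
      have : {y : ℝ | l < (y : EReal) ∧ y < x₀}
          = ((fun y : ℝ => (y : EReal)) ⁻¹' (Ioi l)) ∩ Iio x₀ := rfl
      rw [this]
      exact ((isOpen_Ioi.preimage continuous_coe_real_ereal)).inter isOpen_Iio
    have hgint : IntervalIntegrable (deriv g) volume a x := by
      apply ContinuousOn.intervalIntegrable
      rw [huIcc]
      intro t ht
      exact ((hgC.continuousAt (hopen.mem_nhds (hmem t ht))).continuousWithinAt)
    have hGTC : ∫ t in a..x, deriv g t = g x - g a := by
      apply intervalIntegral.integral_eq_sub_of_hasDerivAt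
      · intro t ht
        rw [huIcc] at ht
        exact (hgdiff t (hmem t ht).1 (hmem t ht).2).hasDerivAt
      · exact hgint
    -- pointwise bound
    have hpt : ∀ t ∈ Icc a x, f t ≤ c * deriv g t := by
      intro t ht
      have hm := hmono (a := t) (b := x) ⟨(hmem t ht).1, (hmem t ht).2⟩ ⟨hxl, hxx₀⟩ ht.2
      have hg't : 0 < deriv g t := hg' t (hmem t ht).1 (hmem t ht).2
      calc f t = f t / deriv g t * deriv g t := (div_mul_cancel₀ (f t) hg't.ne').symm
        _ ≤ c * deriv g t := mul_le_mul_of_nonneg_right hm hg't.le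
    have hint_le : ∫ t in a..x, f t ≤ ∫ t in a..x, c * deriv g t :=
      intervalIntegral.integral_mono_on hax.le hfint (hgint.const_mul c) hpt
    have h2 : ∫ t in a..x, c * deriv g t = c * (g x - g a) := by
      rw [intervalIntegral.integral_const_mul, hGTC]
    have hga : 0 < g a := hgpos a hal (lt_trans hax hxx₀)
    have hPx : P x = c * g x := by
      rw [hP, hc]; ring
    have : F x - F a ≤ c * g x - c * g a := by
      rw [← hFTC]
      calc ∫ t in a..x, f t ≤ c * (g x - g a) := by rw [← h2]; exact hint_le
        _ = c * g x - c * g a := by ring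
    nlinarith [mul_nonneg hc0 hga.le]
  -- limit argument : find a sequence a n in (l, x) decreasing to l
  have hS : μ {y : ℝ | (y : EReal) ≤ l} = 0 := by
    apply measure_mono_null _ hsupp
    intro y hy
    simp only [mem_setOf_eq] at hy ⊢
    intro h
    exact absurd hy (not_le.2 h.1)
  obtain ⟨a, hal, hax, hanti, hinter⟩ :
      ∃ a : ℕ → ℝ, (∀ n, l < (a n : EReal)) ∧ (∀ n, a n < x) ∧ Antitone a ∧
        (⋂ n, Iic (a n)) ⊆ {y : ℝ | (y : EReal) ≤ l} := by
    induction l with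
    | bot =>
        refine ⟨fun n => x - 1 - n, fun n => EReal.bot_lt_coe _, fun n => by
          push_cast; linarith [Nat.cast_nonneg (α := ℝ) n], ?_, ?_⟩
        · intro m n hmn
          simp only
          have : (m : ℝ) ≤ n := by exact_mod_cast hmn
          linarith
        · intro y hy
          simp only [mem_iInter, mem_Iic] at hy
          obtain ⟨n, hn⟩ := exists_nat_gt (x - 1 - y)
          have := hy n
          exfalso; linarith
    | coe lr =>
        have hlrx : lr < x := by exact_mod_cast hxl
        refine ⟨fun n => lr + (x - lr) / (n + 2), fun n => ?_, fun n => ?_, ?_, ?_⟩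
        · have : 0 < (x - lr) / ((n : ℝ) + 2) := div_pos (by linarith) (by positivity)
          exact_mod_cast (by linarith : lr < lr + (x - lr) / ((n : ℝ) + 2))
        · have h1 : (x - lr) / ((n : ℝ) + 2) < x - lr := by
            apply div_lt_self (by linarith)
            have : (0:ℝ) ≤ (n:ℝ) := Nat.cast_nonneg n
            linarith
          linarith
        · intro m n hmn
          simp only
          have hm : (m : ℝ) ≤ n := by exact_mod_cast hmn
          have : (x - lr) / ((n : ℝ) + 2) ≤ (x - lr) / ((m : ℝ) + 2) := by
            apply div_le_div_of_nonneg_left (by linarith) (by positivity) (by linarith)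
          linarith
        · intro y hy
          simp only [mem_iInter, mem_Iic] at hy
          simp only [mem_setOf_eq]
          have hylr : y ≤ lr := by
            have htend : Tendsto (fun n : ℕ => lr + (x - lr) / (n + 2)) atTop (𝓝 lr) := by
              have h0 : Tendsto (fun n : ℕ => (x - lr) / (n + 2)) atTop (𝓝 0) := by
                apply Tendsto.div_atTop tendsto_const_nhds
                exact tendsto_atTop_add_const_right _ 2 tendsto_natCast_atTop_atTop
              simpa using tendsto_const_nhds.add h0
            exact ge_of_tendsto' htend hy
          exact_mod_cast hylr
    | top => exact absurd (lt_trans hx₀l hx₀r) (by simp)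
  have htend0 : Tendsto (fun n => μ (Iic (a n))) atTop (𝓝 0) := by
    have h1 : Tendsto (fun n => μ (Iic (a n))) atTop (𝓝 (μ (⋂ n, Iic (a n)))) :=
      tendsto_measure_iInter_atTop (fun n => (measurableSet_Iic).nullMeasurableSet)
        (fun m n hmn => Iic_subset_Iic.2 (hanti hmn)) ⟨0, measure_ne_top μ _⟩
    have h2 : μ (⋂ n, Iic (a n)) = 0 :=
      le_antisymm (le_trans (measure_mono hinter) hS.le) zero_le
    rwa [h2] at h1
  have htendF : Tendsto (fun n => F (a n)) atTop (𝓝 0) := by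
    have : Tendsto (fun n => (μ (Iic (a n))).toReal) atTop (𝓝 (0 : ENNReal).toReal) :=
      (ENNReal.tendsto_toReal (by simp)).comp htend0
    simpa [hFdef] using this
  have hfin : F x - P x ≤ 0 := ge_of_tendsto' htendF (fun n => key (a n) (hal n) (hax n))
  linarith
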